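/- Let F be a linearly ordered field in which every nonnegative element is a square. Let (a, b, c) be a line with (a, b) ≠ (0, 0), let (x₀, y₀) ∈ F², and let s ∈ F satisfy (a·x₀ + b·y₀ + c)² ≤ s·(a² + b²). Then there exists (x, y) ∈ F² with a·x + b·y + c = 0 and (x − x₀)² + (y − y₀)² = s. (A circle intersects a line whenever the distance from the center to the line does not exceed the radius.) -/

import Mathlib

/-- In the plane over a linearly ordered field in which every
nonnegative element is a square, a circle intersects a line whenever the
distance from the center to the line does not exceed the radius. -/
theorem stmt_11 {F : Type*} [Field F] [LinearOrder F] [IsStrictOrderedRing F]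
    (hsq : ∀ x : F, 0 ≤ x → ∃ y : F, x = y ^ 2)
    (a b c : F) (hl : (a, b) ≠ ((0 : F), (0 : F)))
    (x₀ y₀ s : F) (hs : (a * x₀ + b * y₀ + c) ^ 2 ≤ s * (a ^ 2 + b ^ 2)) :
    ∃ x y : F, a * x + b * y + c = 0 ∧ (x - x₀) ^ 2 + (y - y₀) ^ 2 = s := by
  set d : F := a * x₀ + b * y₀ + c with hd
  set n : F := a ^ 2 + b ^ 2 with hn
  have hn0 : 0 < n := by
    rcases (by by_contra h; push_neg at h; exact hl (Prod.ext h.1 h.2) : a ≠ 0 ∨ b ≠ 0) with h | h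
    · have := sq_nonneg b; have := pow_pos (abs_pos.mpr h) 2
      nlinarith [sq_abs a]
    · have := sq_nonneg a; have := pow_pos (abs_pos.mpr h) 2
      nlinarith [sq_abs b]
  have hne : n ≠ 0 := ne_of_gt hn0
  have hnum : 0 ≤ (s * n - d ^ 2) / n ^ 2 := by
    apply div_nonneg
    · linarith [hs]
    · positivity
  obtain ⟨t, ht⟩ := hsq _ hnum
  refine ⟨x₀ - a * d / n - b * t, y₀ - b * d / n + a * t, ?_, ?_⟩
  · field_simp
    ring
  · have ht' : t ^ 2 * n ^ 2 = s * n - d ^ 2 := by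
      field_simp at ht
      linarith [ht]
    field_simp
    nlinarith [ht']
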